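/- arXiv:1903.10898 — 3 statements merged into one kernel-verified Lean document; each statement's English description precedes it below -/
import Mathlib

section
/- The function M ↦ (det M)^(1/n) is concave on the set of positive definite n×n Hermitian matrices: for positive definite Hermitian matrices A, B and t ∈ [0,1], det((1-t)A + tB)^(1/n) ≥ (1-t)·det(A)^(1/n) + t·det(B)^(1/n). -/
open ComplexOrder Matrix

open Finset in
private lemma amgm_aux (n : ℕ) (hn : 1 ≤ n) (μ : Fin n → ℝ) (hμ : ∀ i, 0 < μ i) :
    1 + (∏ i, μ i) ^ ((n : ℝ)⁻¹) ≤ (∏ i, (1 + μ i)) ^ ((n : ℝ)⁻¹) := by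
  have hn0 : (0:ℝ) < n := by exact_mod_cast Nat.lt_of_lt_of_le Nat.zero_lt_one hn
  have h1μ : ∀ i, (0:ℝ) < 1 + μ i := fun i => by linarith [hμ i]
  have hPpos : (0:ℝ) < ∏ i, (1 + μ i) := Finset.prod_pos fun i _ => h1μ i
  have hμprod : (0:ℝ) < ∏ i, μ i := Finset.prod_pos fun i _ => hμ i
  have hQ : (0:ℝ) < (∏ i, (1 + μ i)) ^ ((n:ℝ)⁻¹) := Real.rpow_pos_of_pos hPpos _
  have hw : ∀ i ∈ (univ : Finset (Fin n)), (0:ℝ) ≤ (n:ℝ)⁻¹ := fun _ _ => by positivity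
  have hwsum : ∑ _i ∈ (univ : Finset (Fin n)), (n:ℝ)⁻¹ = 1 := by
    rw [Finset.sum_const, card_univ, Fintype.card_fin, nsmul_eq_mul]
    field_simp
  have g1 := Real.geom_mean_le_arith_mean_weighted univ (fun _ => (n:ℝ)⁻¹)
      (fun i => 1 / (1 + μ i)) hw hwsum (fun i _ => (one_div_nonneg).mpr (h1μ i).le)
  have g2 := Real.geom_mean_le_arith_mean_weighted univ (fun _ => (n:ℝ)⁻¹)
      (fun i => μ i / (1 + μ i)) hw hwsum (fun i _ => div_nonneg (hμ i).le (h1μ i).le)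
  have hsum : (∑ i, (n:ℝ)⁻¹ * (1 / (1 + μ i))) + (∑ i, (n:ℝ)⁻¹ * (μ i / (1 + μ i))) = 1 := by
    rw [← Finset.sum_add_distrib]
    have : ∀ i ∈ (univ : Finset (Fin n)),
        (n:ℝ)⁻¹ * (1 / (1 + μ i)) + (n:ℝ)⁻¹ * (μ i / (1 + μ i)) = (n:ℝ)⁻¹ := by
      intro i _
      have := (h1μ i).ne'
      field_simp
    rw [Finset.sum_congr rfl this, hwsum]
  have e1 : (∏ i, (1 / (1 + μ i)) ^ ((n:ℝ)⁻¹))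
      = ((∏ i, (1 + μ i)) ^ ((n:ℝ)⁻¹))⁻¹ := by
    rw [Real.finset_prod_rpow _ _ (fun i _ => (one_div_nonneg).mpr (h1μ i).le) _]
    rw [show (∏ i, (1 / (1 + μ i))) = (∏ i, (1 + μ i))⁻¹ by
      rw [← Finset.prod_inv_distrib]; simp [one_div]]
    rw [Real.inv_rpow hPpos.le]
  have e2 : (∏ i, (μ i / (1 + μ i)) ^ ((n:ℝ)⁻¹))
      = (∏ i, μ i) ^ ((n:ℝ)⁻¹) / (∏ i, (1 + μ i)) ^ ((n:ℝ)⁻¹) := by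
    rw [Real.finset_prod_rpow _ _ (fun i _ => div_nonneg (hμ i).le (h1μ i).le) _,
      Finset.prod_div_distrib,
      Real.div_rpow hμprod.le hPpos.le]
  have total : ((∏ i, (1 + μ i)) ^ ((n:ℝ)⁻¹))⁻¹
      + (∏ i, μ i) ^ ((n:ℝ)⁻¹) / (∏ i, (1 + μ i)) ^ ((n:ℝ)⁻¹) ≤ 1 := by
    rw [← e1, ← e2]
    exact (add_le_add g1 g2).trans_eq hsum
  have := mul_le_mul_of_nonneg_right total hQ.le
  rwa [add_mul, inv_mul_cancel₀ hQ.ne', div_mul_cancel₀ _ hQ.ne', one_mul] at this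

private lemma posDef_conj_aux {n : ℕ} {A : Matrix (Fin n) (Fin n) ℂ} (hA : A.PosDef)
    (B : Matrix (Fin n) (Fin n) ℂ) (hB : IsUnit B.det) : (Bᴴ * A * B).PosDef := by
  refine Matrix.PosDef.of_dotProduct_mulVec_pos (Matrix.isHermitian_conjTranspose_mul_mul B hA.1) fun x hx => ?_
  have hBx : B *ᵥ x ≠ 0 := by
    intro h
    apply hx
    have : B⁻¹ *ᵥ (B *ᵥ x) = B⁻¹ *ᵥ 0 := by rw [h]
    rwa [Matrix.mulVec_mulVec, Matrix.nonsing_inv_mul B hB, Matrix.one_mulVec,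
      Matrix.mulVec_zero] at this
  simpa only [Matrix.star_mulVec, Matrix.dotProduct_mulVec, Matrix.vecMul_vecMul]
    using hA.dotProduct_mulVec_pos hBx

private lemma posDef_smul_real {n : ℕ} {M : Matrix (Fin n) (Fin n) ℂ} (hM : M.PosDef)
    {c : ℝ} (hc : 0 < c) : (c • M).PosDef := by
  refine Matrix.PosDef.of_dotProduct_mulVec_pos ?_ ?_
  · show (c • M)ᴴ = c • M
    rw [Matrix.conjTranspose_smul, hM.1.eq, star_trivial]
  · intro x hx
    have h := hM.dotProduct_mulVec_pos hx
    have : star x ⬝ᵥ ((c • M) *ᵥ x) = (c:ℂ) * (star x ⬝ᵥ (M *ᵥ x)) := by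
      rw [show (c • M) = (c:ℂ) • M by ext i j; simp [Complex.real_smul]]
      rw [Matrix.smul_mulVec, dotProduct_smul, smul_eq_mul]
    rw [this]
    rw [Complex.lt_def] at h ⊢
    constructor
    · simp only [Complex.mul_re, Complex.ofReal_re, Complex.ofReal_im, Complex.zero_re,
        zero_mul, sub_zero] at h ⊢
      nlinarith [h.1, hc, h.2]
    · simp only [Complex.mul_im, Complex.ofReal_re, Complex.ofReal_im, Complex.zero_im,
        zero_mul] at h ⊢
      rw [← h.2]; ring

private lemma det_one_add_aux {n : ℕ} {C : Matrix (Fin n) (Fin n) ℂ} (hC : C.PosDef) :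
    (1 + C).det = ((∏ i, (1 + hC.1.eigenvalues i) : ℝ) : ℂ) := by
  have hU := hC.1.spectral_theorem
  rw [Unitary.conjStarAlgAut_apply] at hU
  set U := (Matrix.IsHermitian.eigenvectorUnitary hC.1 : Matrix (Fin n) (Fin n) ℂ) with hUdef
  have hUU : U * star U = 1 :=
    Matrix.mem_unitaryGroup_iff.mp (Matrix.IsHermitian.eigenvectorUnitary hC.1).2
  have key : (1 + C) = U * (1 + Matrix.diagonal (RCLike.ofReal ∘ hC.1.eigenvalues)) * star U := by
    rw [Matrix.mul_add, Matrix.add_mul, Matrix.mul_one, hUU, ← hU]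
  rw [key, Matrix.det_mul_right_comm, hUU, Matrix.one_mul]
  rw [show (1 : Matrix (Fin n) (Fin n) ℂ) = Matrix.diagonal (fun _ => (1:ℂ)) by
    simp [Matrix.diagonal_one]]
  rw [Matrix.diagonal_add, Matrix.det_diagonal]
  push_cast
  rfl

open scoped MatrixOrder in
private lemma det_superadd_aux (n : ℕ) (hn : 1 ≤ n) (A B : Matrix (Fin n) (Fin n) ℂ)
    (hA : A.PosDef) (hB : B.PosDef) :
    A.det.re ^ ((n:ℝ)⁻¹) + B.det.re ^ ((n:ℝ)⁻¹) ≤ (A + B).det.re ^ ((n:ℝ)⁻¹) := by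
  classical
  set S := CFC.sqrt A with hSdef
  have hS : S.PosSemidef := (CFC.sqrt_nonneg A).posSemidef
  have hSS : S * S = A := CFC.sqrt_mul_sqrt_self A hA.posSemidef.nonneg
  have hdetS : IsUnit S.det := by
    have : S.det * S.det = A.det := by rw [← Matrix.det_mul, hSS]
    have hAdet := hA.det_pos.ne'
    refine isUnit_iff_ne_zero.mpr fun h => ?_
    apply hAdet
    rw [← this, h, mul_zero]
  have hSinv : S * S⁻¹ = 1 := Matrix.mul_nonsing_inv S hdetS
  have hinvS : S⁻¹ * S = 1 := Matrix.nonsing_inv_mul S hdetS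
  have hinvherm : (S⁻¹)ᴴ = S⁻¹ := by
    rw [Matrix.conjTranspose_nonsing_inv, hS.1.eq]
  set C := S⁻¹ * B * S⁻¹ with hCdef
  have hC : C.PosDef := by
    have h := posDef_conj_aux hB S⁻¹
      (by rw [Matrix.det_nonsing_inv]; exact isUnit_ringInverse.mpr hdetS)
    rwa [hinvherm] at h
  set μ := hC.1.eigenvalues with hμdef
  have hμpos : ∀ i, 0 < μ i := hC.eigenvalues_pos
  have hSCS : S * C * S = B := by
    rw [hCdef]
    simp only [← Matrix.mul_assoc]
    rw [hSinv, Matrix.one_mul, Matrix.mul_assoc, hinvS, Matrix.mul_one]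
  have hAB : A + B = S * (1 + C) * S := by
    rw [Matrix.mul_add, Matrix.add_mul, Matrix.mul_one, hSS, hSCS]
  have hdetA_eq : A.det = ((∏ i, hA.1.eigenvalues i : ℝ) : ℂ) := by
    rw [hA.1.det_eq_prod_eigenvalues]; push_cast; rfl
  set a : ℝ := ∏ i, hA.1.eigenvalues i with hadef
  have hapos : 0 < a := Finset.prod_pos fun i _ => hA.eigenvalues_pos i
  have hdet1C : (1 + C).det = ((∏ i, (1 + μ i) : ℝ) : ℂ) := det_one_add_aux hC
  have hdetC : C.det = ((∏ i, μ i : ℝ) : ℂ) := by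
    rw [hC.1.det_eq_prod_eigenvalues]; push_cast; rfl
  have hSdet2 : S.det * S.det = A.det := by rw [← Matrix.det_mul, hSS]
  have h1 : (A + B).det = ((a * ∏ i, (1 + μ i) : ℝ) : ℂ) := by
    rw [hAB, Matrix.det_mul, Matrix.det_mul, mul_right_comm, hSdet2, hdetA_eq, hdet1C]
    push_cast; ring
  have h2 : B.det = ((a * ∏ i, μ i : ℝ) : ℂ) := by
    rw [← hSCS, Matrix.det_mul, Matrix.det_mul, mul_right_comm, hSdet2, hdetA_eq, hdetC]
    push_cast; ring
  have hre1 : (A + B).det.re = a * ∏ i, (1 + μ i) := by rw [h1, Complex.ofReal_re]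
  have hre2 : B.det.re = a * ∏ i, μ i := by rw [h2, Complex.ofReal_re]
  have hreA : A.det.re = a := by rw [hdetA_eq, Complex.ofReal_re]
  rw [hre1, hre2, hreA]
  have hμprodpos : (0:ℝ) < ∏ i, μ i := Finset.prod_pos fun i _ => hμpos i
  have hPpos : (0:ℝ) < ∏ i, (1 + μ i) :=
    Finset.prod_pos fun i _ => by linarith [hμpos i]
  rw [Real.mul_rpow hapos.le hμprodpos.le, Real.mul_rpow hapos.le hPpos.le]
  have hkey := amgm_aux n hn μ hμpos
  have har : (0:ℝ) < a ^ ((n:ℝ)⁻¹) := Real.rpow_pos_of_pos hapos _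
  calc a ^ ((n:ℝ)⁻¹) + a ^ ((n:ℝ)⁻¹) * (∏ i, μ i) ^ ((n:ℝ)⁻¹)
      = a ^ ((n:ℝ)⁻¹) * (1 + (∏ i, μ i) ^ ((n:ℝ)⁻¹)) := by ring
    _ ≤ a ^ ((n:ℝ)⁻¹) * (∏ i, (1 + μ i)) ^ ((n:ℝ)⁻¹) := by
        exact mul_le_mul_of_nonneg_left hkey har.le

private lemma det_smul_re_aux {n : ℕ} {M : Matrix (Fin n) (Fin n) ℂ} (hM : M.PosDef)
    (c : ℝ) : ((c • M).det.re) = c ^ n * M.det.re := by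
  have hMre : M.det = ((M.det.re : ℝ) : ℂ) := by
    have h := hM.det_pos
    rw [Complex.lt_def] at h
    exact Complex.ext rfl (by simpa using h.2.symm)
  have : (c • M) = (c:ℂ) • M := by ext i j; simp [Complex.real_smul]
  rw [this, Matrix.det_smul, Fintype.card_fin, hMre, ← Complex.ofReal_pow,
    ← Complex.ofReal_mul, Complex.ofReal_re, Complex.ofReal_re]

private lemma smul_det_rpow_aux {n : ℕ} {M : Matrix (Fin n) (Fin n) ℂ} (hM : M.PosDef)
    (hn : 1 ≤ n) {c : ℝ} (hc : 0 ≤ c) :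
    ((c • M).det.re) ^ ((n:ℝ)⁻¹) = c * M.det.re ^ ((n:ℝ)⁻¹) := by
  have hMre : 0 < M.det.re := by
    have h := hM.det_pos
    rw [Complex.lt_def] at h
    simpa using h.1
  have hn0 : ((n:ℝ)) ≠ 0 := Nat.cast_ne_zero.mpr (by omega)
  rw [det_smul_re_aux hM c, Real.mul_rpow (by positivity) hMre.le]
  congr 1
  rw [← Real.rpow_natCast c n, ← Real.rpow_mul hc, mul_inv_cancel₀ hn0, Real.rpow_one]

/-- Concavity of `M ↦ (det M)^(1/n)` on positive definite Hermitian matrices. -/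
theorem det_rpow_inv_concave_posDef (n : ℕ) (hn : 1 ≤ n)
    (A B : Matrix (Fin n) (Fin n) ℂ) (hA : A.PosDef) (hB : B.PosDef)
    (t : ℝ) (ht0 : 0 ≤ t) (ht1 : t ≤ 1) :
    ((1 - t) • A + t • B).det.re ^ ((n : ℝ)⁻¹) ≥
      (1 - t) * A.det.re ^ ((n : ℝ)⁻¹) + t * B.det.re ^ ((n : ℝ)⁻¹) := by
  rcases eq_or_lt_of_le ht0 with rfl | ht0'
  · simp
  rcases eq_or_lt_of_le ht1 with rfl | ht1'
  · simp
  have h1t : 0 < 1 - t := by linarith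
  rw [ge_iff_le]
  calc (1 - t) * A.det.re ^ ((n:ℝ)⁻¹) + t * B.det.re ^ ((n:ℝ)⁻¹)
      = ((1 - t) • A).det.re ^ ((n:ℝ)⁻¹) + (t • B).det.re ^ ((n:ℝ)⁻¹) := by
        rw [smul_det_rpow_aux hA hn h1t.le, smul_det_rpow_aux hB hn ht0'.le]
    _ ≤ ((1 - t) • A + t • B).det.re ^ ((n:ℝ)⁻¹) :=
        det_superadd_aux n hn _ _ (posDef_smul_real hA h1t) (posDef_smul_real hB ht0')
end

section
/- For positive definite n×n Hermitian matrices A and B, det(A + B)^(1/n) ≥ det(A)^(1/n) + det(B)^(1/n). -/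
open ComplexOrder Finset Matrix
open scoped MatrixOrder

lemma minkowski_scalar (n : ℕ) (hn : 1 ≤ n) (a b : Fin n → ℝ)
    (ha : ∀ i, 0 < a i) (hb : ∀ i, 0 < b i) :
    (∏ i, a i) ^ ((n:ℝ)⁻¹) + (∏ i, b i) ^ ((n:ℝ)⁻¹) ≤ (∏ i, (a i + b i)) ^ ((n:ℝ)⁻¹) := by
  have hn0 : (0:ℝ) < n := by exact_mod_cast hn
  set c : Fin n → ℝ := fun i => a i + b i with hc_def
  have hc : ∀ i, 0 < c i := fun i => add_pos (ha i) (hb i)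
  have hPa : 0 < ∏ i, a i := Finset.prod_pos fun i _ => ha i
  have hPb : 0 < ∏ i, b i := Finset.prod_pos fun i _ => hb i
  have hPc : 0 < ∏ i, c i := Finset.prod_pos fun i _ => hc i
  have hw : ∀ i ∈ (univ : Finset (Fin n)), (0:ℝ) ≤ (n:ℝ)⁻¹ := fun _ _ => by positivity
  have hw' : ∑ _i ∈ (univ : Finset (Fin n)), (n:ℝ)⁻¹ = 1 := by
    simp [Finset.sum_const, mul_inv_cancel₀ hn0.ne']
  have h1 := Real.geom_mean_le_arith_mean_weighted univ (fun _ => (n:ℝ)⁻¹)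
      (fun i => a i / c i) hw hw' (fun i _ => (div_pos (ha i) (hc i)).le)
  have h2 := Real.geom_mean_le_arith_mean_weighted univ (fun _ => (n:ℝ)⁻¹)
      (fun i => b i / c i) hw hw' (fun i _ => (div_pos (hb i) (hc i)).le)
  have hsum : (∑ i, (n:ℝ)⁻¹ * (a i / c i)) + (∑ i, (n:ℝ)⁻¹ * (b i / c i)) = 1 := by
    rw [← Finset.sum_add_distrib]
    have : ∀ i ∈ (univ : Finset (Fin n)),
        (n:ℝ)⁻¹ * (a i / c i) + (n:ℝ)⁻¹ * (b i / c i) = (n:ℝ)⁻¹ := by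
      intro i _
      rw [← mul_add, ← add_div, div_self (hc i).ne']
      ring
    rw [Finset.sum_congr rfl this, hw']
  have hprod_a : ∏ i, (a i / c i) ^ ((n:ℝ)⁻¹) = (∏ i, a i) ^ ((n:ℝ)⁻¹) / (∏ i, c i) ^ ((n:ℝ)⁻¹) := by
    rw [Real.finset_prod_rpow univ _ (fun i _ => (div_pos (ha i) (hc i)).le),
      Finset.prod_div_distrib, Real.div_rpow hPa.le hPc.le]
  have hprod_b : ∏ i, (b i / c i) ^ ((n:ℝ)⁻¹) = (∏ i, b i) ^ ((n:ℝ)⁻¹) / (∏ i, c i) ^ ((n:ℝ)⁻¹) := by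
    rw [Real.finset_prod_rpow univ _ (fun i _ => (div_pos (hb i) (hc i)).le),
      Finset.prod_div_distrib, Real.div_rpow hPb.le hPc.le]
  have hfinal : (∏ i, a i) ^ ((n:ℝ)⁻¹) / (∏ i, c i) ^ ((n:ℝ)⁻¹)
      + (∏ i, b i) ^ ((n:ℝ)⁻¹) / (∏ i, c i) ^ ((n:ℝ)⁻¹) ≤ 1 := by
    rw [← hprod_a, ← hprod_b]
    calc _ ≤ (∑ i, (n:ℝ)⁻¹ * (a i / c i)) + (∑ i, (n:ℝ)⁻¹ * (b i / c i)) := add_le_add h1 h2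
      _ = 1 := hsum
  rw [← add_div, div_le_one (Real.rpow_pos_of_pos hPc _)] at hfinal
  exact hfinal

lemma posDef_conj' {n : ℕ} {M N : Matrix (Fin n) (Fin n) ℂ} (hM : M.PosDef) (hN : IsUnit N) :
    (Nᴴ * M * N).PosDef := by
  refine Matrix.PosDef.of_dotProduct_mulVec_pos (Matrix.isHermitian_conjTranspose_mul_mul N hM.1) fun x hx => ?_
  have hNx : N *ᵥ x ≠ 0 :=
    (Matrix.mulVec_injective_iff_isUnit.mpr hN).ne_iff' (by simp) |>.2 hx
  simpa only [star_mulVec, dotProduct_mulVec, vecMul_vecMul] using hM.dotProduct_mulVec_pos hNx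

lemma det_one_add_hermitian {n : ℕ} {C : Matrix (Fin n) (Fin n) ℂ} (hC : C.IsHermitian) :
    (1 + C).det = ∏ i, ((1 : ℂ) + (hC.eigenvalues i : ℂ)) := by
  have hU := (Matrix.mem_unitaryGroup_iff).mp (hC.eigenvectorUnitary).2
  calc (1 + C).det
      = ((hC.eigenvectorUnitary : Matrix (Fin n) (Fin n) ℂ)
        * ((1 : Matrix (Fin n) (Fin n) ℂ) + diagonal (RCLike.ofReal ∘ hC.eigenvalues))
        * (star (hC.eigenvectorUnitary : Matrix (Fin n) (Fin n) ℂ))).det := by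
        rw [mul_add, add_mul, mul_one, hU]; conv_lhs => rw [hC.spectral_theorem]
        rfl
    _ = ((1 : Matrix (Fin n) (Fin n) ℂ) + diagonal (RCLike.ofReal ∘ hC.eigenvalues)).det := by
        rw [Matrix.det_mul_right_comm, hU, one_mul]
    _ = ∏ i, ((1 : ℂ) + (hC.eigenvalues i : ℂ)) := by
        rw [← Matrix.diagonal_one, Matrix.diagonal_add, Matrix.det_diagonal]
        simp [Function.comp]

/-- Minkowski determinant inequality for positive definite Hermitian matrices. -/
theorem det_add_rpow_inv_ge (n : ℕ) (hn : 1 ≤ n)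
    (A B : Matrix (Fin n) (Fin n) ℂ) (hA : A.PosDef) (hB : B.PosDef) :
    (A + B).det.re ^ ((n : ℝ)⁻¹) ≥ A.det.re ^ ((n : ℝ)⁻¹) + B.det.re ^ ((n : ℝ)⁻¹) := by
  classical
  set S := CFC.sqrt A with hS_def
  have hSH : S.IsHermitian := (CFC.sqrt_nonneg A).posSemidef.1
  have hSS : S * S = A := CFC.sqrt_mul_sqrt_self A hA.posSemidef.nonneg
  have hdetSS : S.det * S.det = A.det := by rw [← Matrix.det_mul, hSS]
  have hdetA : A.det ≠ 0 := hA.det_pos.ne'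
  have hdetS : S.det ≠ 0 := fun h => hdetA (by rw [← hdetSS, h, mul_zero])
  have hSunit : IsUnit S := (Matrix.isUnit_iff_isUnit_det S).2 hdetS.isUnit
  have hSinvH : S⁻¹.IsHermitian := hSH.inv
  have hSinvUnit : IsUnit S⁻¹ := Matrix.isUnit_nonsing_inv_iff.2 hSunit
  set C := S⁻¹ * B * S⁻¹ with hC_def
  have hC : C.PosDef := by
    have := posDef_conj' hB hSinvUnit
    rwa [hSinvH.eq] at this
  have hSinv : S * S⁻¹ = 1 := Matrix.mul_nonsing_inv S hdetS.isUnit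
  have hinvS : S⁻¹ * S = 1 := Matrix.nonsing_inv_mul S hdetS.isUnit
  have hSCS : S * C * S = B := by
    rw [hC_def]
    calc S * (S⁻¹ * B * S⁻¹) * S = (S * S⁻¹) * B * (S⁻¹ * S) := by noncomm_ring
      _ = B := by rw [hSinv, hinvS, one_mul, mul_one]
  have hABeq : A + B = S * (1 + C) * S := by
    refine Eq.symm ?_
    calc S * (1 + C) * S = S * S + S * C * S := by noncomm_ring
      _ = A + B := by rw [hSS, hSCS]
  have hα : ∀ i, 0 < hA.1.eigenvalues i := hA.eigenvalues_pos
  have hμ : ∀ i, 0 < hC.1.eigenvalues i := hC.eigenvalues_pos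
  have hAdet : A.det = ((∏ i, hA.1.eigenvalues i : ℝ) : ℂ) := by
    rw [hA.1.det_eq_prod_eigenvalues]; push_cast; rfl
  have hCdet : C.det = ((∏ i, hC.1.eigenvalues i : ℝ) : ℂ) := by
    rw [hC.1.det_eq_prod_eigenvalues]; push_cast; rfl
  have h1Cdet : (1 + C).det = ((∏ i, (1 + hC.1.eigenvalues i) : ℝ) : ℂ) := by
    rw [det_one_add_hermitian hC.1]; push_cast; rfl
  have hdet_fact : ∀ M : Matrix (Fin n) (Fin n) ℂ, (S * M * S).det = A.det * M.det := by
    intro M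
    rw [Matrix.det_mul, Matrix.det_mul, ← hdetSS]; ring
  have hABdet : (A + B).det = (((∏ i, hA.1.eigenvalues i) * ∏ i, (1 + hC.1.eigenvalues i) : ℝ) : ℂ) := by
    rw [hABeq, hdet_fact, hAdet, h1Cdet]; push_cast; ring
  have hBdet : B.det = (((∏ i, hA.1.eigenvalues i) * ∏ i, hC.1.eigenvalues i : ℝ) : ℂ) := by
    rw [← hSCS, hdet_fact, hAdet, hCdet]; push_cast; ring
  rw [hABdet, hAdet, hBdet, Complex.ofReal_re, Complex.ofReal_re, Complex.ofReal_re]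
  have key := minkowski_scalar n hn (fun i => hA.1.eigenvalues i)
    (fun i => hA.1.eigenvalues i * hC.1.eigenvalues i) hα
    (fun i => mul_pos (hα i) (hμ i))
  have e1 : ∏ i, (hA.1.eigenvalues i + hA.1.eigenvalues i * hC.1.eigenvalues i)
      = (∏ i, hA.1.eigenvalues i) * ∏ i, (1 + hC.1.eigenvalues i) := by
    rw [← Finset.prod_mul_distrib]
    exact Finset.prod_congr rfl fun i _ => by ring
  have e2 : ∏ i, (hA.1.eigenvalues i * hC.1.eigenvalues i)
      = (∏ i, hA.1.eigenvalues i) * ∏ i, hC.1.eigenvalues i := Finset.prod_mul_distrib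
  rw [e1, e2] at key
  exact key
end

section
/- The function (λ₁, λ₂) ↦ arctan(λ₁) + arctan(λ₂) has convex superlevel sets {λ ∈ ℝ² : arctan(λ₁) + arctan(λ₂) ≥ c} for every c ≥ 0. -/
open Real Set

private lemma invconv : ConvexOn ℝ (Set.Ioi (0:ℝ)) (fun x : ℝ => x⁻¹) := by
  have := convexOn_zpow (𝕜 := ℝ) (-1)
  simpa [zpow_neg, zpow_one] using this

private lemma pos_of_mem (a b x : ℝ) (ha : 0 < a) (hx : -(b/a) < x) : 0 < a*x+b := by
  rw [neg_div'] at hx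
  have := (div_lt_iff₀ ha).1 hx
  linarith

private lemma aux_convex (a b d k : ℝ) (ha : 0 < a) (hk : 0 ≤ k) :
    ConvexOn ℝ (Set.Ioi (-(b/a))) (fun x : ℝ => d + k * (a*x+b)⁻¹) := by
  have base : ConvexOn ℝ (Set.Ioi (-(b/a))) (fun x : ℝ => (a*x+b)⁻¹) := by
    refine ⟨convex_Ioi _, ?_⟩
    intro x hx y hy p q hp hq hpq
    have hx' : (0:ℝ) < a*x+b := pos_of_mem a b x ha hx
    have hy' : (0:ℝ) < a*y+b := pos_of_mem a b y ha hy
    have h := invconv.2 (mem_Ioi.2 hx') (mem_Ioi.2 hy') hp hq hpq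
    simp only [smul_eq_mul] at h ⊢
    have e : a*(p * x + q * y)+b = p * (a*x+b) + q * (a*y+b) := by
      linear_combination -b * hpq
    rw [e]
    exact h
  have h1 := (base.smul hk).add_const d
  refine h1.congr ?_
  intro x _
  simp [smul_eq_mul, add_comm]

private lemma g_convex (c : ℝ) (h0 : 0 < c) (h1 : c < π) :
    ConvexOn ℝ (Set.Ioi (Real.tan (c - π/2))) (fun x => Real.tan (c - Real.arctan x)) := by
  have hpi := Real.pi_pos
  have hIoo1 : -(π/2) < c - π/2 := by linarith
  have hIoo2 : c - π/2 < π/2 := by linarith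
  have harc : ∀ x ∈ Set.Ioi (tan (c - π/2)), c - π/2 < arctan x := by
    intro x hx
    have := arctan_strictMono (mem_Ioi.1 hx)
    rwa [arctan_tan hIoo1 hIoo2] at this
  rcases eq_or_ne c (π/2) with rfl | hne
  · have ht0 : tan ((π:ℝ)/2 - π/2) = 0 := by norm_num
    rw [ht0]
    refine invconv.congr ?_
    intro x hx
    simp only
    rw [show (π/2 - arctan x) = (π/2 - arctan x) from rfl, tan_pi_div_two_sub, tan_arctan]
  · have hsin : 0 < sin c := sin_pos_of_pos_of_lt_pi h0 h1
    have hcos : cos c ≠ 0 := by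
      intro h
      rcases cos_eq_zero_iff.1 h with ⟨n, hn⟩
      have hb1 : (0:ℝ) < 2*(n:ℝ)+1 := by nlinarith
      have hb2 : (2*(n:ℝ)+1) < 2 := by nlinarith
      have hb1' : (0:ℤ) < 2*n+1 := by exact_mod_cast hb1
      have hb2' : (2*n+1 : ℤ) < 2 := by exact_mod_cast hb2
      have : n = 0 := by omega
      subst this
      apply hne
      rw [hn]; push_cast; ring
    set T := tan c with hT
    have hsinc : sin c = T * cos c := by
      rw [hT, tan_eq_sin_div_cos]; field_simp
    have hTne : T ≠ 0 := by
      intro h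
      rw [h, zero_mul] at hsinc
      linarith
    have ht0 : tan (c - π/2) = -T⁻¹ := by
      rw [show c - π/2 = -(π/2 - c) by ring, tan_neg, tan_pi_div_two_sub]
    -- key facts on the domain
    have hkey : ∀ x ∈ Set.Ioi (tan (c - π/2)),
        (1 + T * x ≠ 0) ∧ (0 < cos c → 0 < 1 + T * x) ∧ (cos c < 0 → 1 + T * x < 0) ∧
        Real.tan (c - Real.arctan x) = (T - x) / (1 + T*x) := by
      intro x hx
      set s := arctan x with hs
      have hs1 : -(π/2) < s := neg_pi_div_two_lt_arctan x
      have hs2 : s < π/2 := arctan_lt_pi_div_two x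
      have hcs : 0 < cos s := by
        apply cos_pos_of_mem_Ioo; exact ⟨hs1, hs2⟩
      have hsins : sin s = x * cos s := by
        have := tan_arctan x
        rw [← hs, tan_eq_sin_div_cos] at this
        field_simp at this
        linarith [this]
      have hms : -(π/2) < c - s := by linarith
      have hms2 : c - s < π/2 := by have := harc x hx; linarith
      have hcms : 0 < cos (c - s) := cos_pos_of_mem_Ioo ⟨hms, hms2⟩
      have hfact : cos (c - s) = cos c * cos s * (1 + T * x) := by
        rw [cos_sub, hsinc, hsins]; ring
      have h1ne : 1 + T * x ≠ 0 := by
        intro h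
        rw [h, mul_zero] at hfact
        linarith
      refine ⟨h1ne, ?_, ?_, ?_⟩
      · intro hcc
        nlinarith [hfact, hcms, mul_pos hcc hcs]
      · intro hcc
        nlinarith [hfact, hcms, mul_pos hcs (neg_pos.2 hcc)]
      · rw [tan_eq_sin_div_cos, sin_sub, hfact, hsinc, hsins]
        rw [div_eq_div_iff (mul_ne_zero (mul_ne_zero hcos (ne_of_gt hcs)) h1ne) h1ne]
        ring
    rcases lt_or_gt_of_ne hTne with hTneg | hTpos
    · -- T < 0, cos c < 0
      have hccneg : cos c < 0 := by
        rcases lt_or_gt_of_ne hcos with h | h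
        · exact h
        · exfalso
          have : 0 < T := by rw [hT, tan_eq_sin_div_cos]; positivity
          linarith
      have hdom : Set.Ioi (tan (c - π/2)) = Set.Ioi (-((-1)/(-T))) := by
        rw [ht0]
        field_simp
      have hconv := aux_convex (-T) (-1) (-T⁻¹) (-T⁻¹*(1+T^2)) (by linarith)
        (by
          have hTi : T⁻¹ < 0 := inv_neg''.mpr hTneg
          nlinarith [sq_nonneg T])
      rw [hdom]
      refine hconv.congr ?_
      intro x hx
      rw [← hdom] at hx
      obtain ⟨h1ne, _, _, hform⟩ := hkey x hx
      simp only
      rw [hform, show -T*x + -1 = -(1 + T*x) by ring, inv_neg, eq_div_iff h1ne]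
      field_simp
      ring
    · -- T > 0, cos c > 0
      have hdom : Set.Ioi (tan (c - π/2)) = Set.Ioi (-((1:ℝ)/T)) := by
        rw [ht0, one_div]
      have hconv := aux_convex T 1 (-T⁻¹) (T⁻¹*(1+T^2)) hTpos
        (by positivity)
      rw [hdom]
      refine hconv.congr ?_
      intro x hx
      rw [← hdom] at hx
      obtain ⟨h1ne, _, _, hform⟩ := hkey x hx
      simp only
      rw [hform, show T*x + 1 = 1 + T*x by ring, eq_div_iff h1ne]
      field_simp
      ring

private lemma key_iff (c : ℝ) (h0 : 0 < c) (h1 : c < π) (x y : ℝ) :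
    c ≤ arctan x + arctan y ↔ tan (c - π/2) < x ∧ tan (c - arctan x) ≤ y := by
  have hpi := pi_pos
  have hIoo1 : -(π/2) < c - π/2 := by linarith
  have hIoo2 : c - π/2 < π/2 := by linarith
  constructor
  · intro h
    have hy2 := arctan_lt_pi_div_two y
    have hx2 := arctan_lt_pi_div_two x
    have hx1 := neg_pi_div_two_lt_arctan x
    have hy1 := neg_pi_div_two_lt_arctan y
    have harcx : c - π/2 < arctan x := by linarith
    have hxgt : tan (c - π/2) < x := by
      have := strictMonoOn_tan (Set.mem_Ioo.mpr ⟨hIoo1, hIoo2⟩)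
        (Set.mem_Ioo.mpr ⟨hx1, hx2⟩) harcx
      rwa [tan_arctan] at this
    refine ⟨hxgt, ?_⟩
    have hm1 : -(π/2) < c - arctan x := by linarith
    have hm2 : c - arctan x < π/2 := by linarith
    have := strictMonoOn_tan.monotoneOn (Set.mem_Ioo.mpr ⟨hm1, hm2⟩)
      (Set.mem_Ioo.mpr ⟨hy1, hy2⟩) (by linarith)
    rwa [tan_arctan] at this
  · rintro ⟨hx, hy⟩
    have harcx : c - π/2 < arctan x := by
      have := arctan_strictMono hx
      rwa [arctan_tan hIoo1 hIoo2] at this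
    have hm1 : -(π/2) < c - arctan x := by linarith [arctan_lt_pi_div_two x]
    have hm2 : c - arctan x < π/2 := by linarith
    have := arctan_strictMono.monotone hy
    rw [arctan_tan hm1 hm2] at this
    linarith

/-- Superlevel sets of `(λ₁,λ₂) ↦ arctan λ₁ + arctan λ₂` at nonnegative levels are convex. -/
theorem arctan_sum_superlevel_convex (c : ℝ) (hc : 0 ≤ c) :
    Convex ℝ {p : ℝ × ℝ | c ≤ Real.arctan p.1 + Real.arctan p.2} := by
  rcases hc.lt_or_eq with h0 | rfl
  · rcases lt_or_ge c π with h1 | h1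
    · intro p hp q hq a b ha hb hab
      rw [Set.mem_setOf_eq, key_iff c h0 h1] at hp hq ⊢
      obtain ⟨hp1, hp2⟩ := hp
      obtain ⟨hq1, hq2⟩ := hq
      have hfst : (a • p + b • q).1 = a * p.1 + b * q.1 := rfl
      have hsnd : (a • p + b • q).2 = a * p.2 + b * q.2 := rfl
      rw [hfst, hsnd]
      constructor
      · have := (convex_Ioi (tan (c - π/2))) (Set.mem_Ioi.2 hp1) (Set.mem_Ioi.2 hq1) ha hb hab
        simpa [smul_eq_mul] using this
      · have hcv := (g_convex c h0 h1).2 (Set.mem_Ioi.2 hp1) (Set.mem_Ioi.2 hq1) ha hb hab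
        simp only [smul_eq_mul] at hcv
        have h1' := mul_le_mul_of_nonneg_left hp2 ha
        have h2' := mul_le_mul_of_nonneg_left hq2 hb
        linarith
    · have hempty : {p : ℝ × ℝ | c ≤ Real.arctan p.1 + Real.arctan p.2} = ∅ := by
        apply Set.eq_empty_of_forall_notMem
        intro p hp
        rw [Set.mem_setOf_eq] at hp
        have ha := arctan_lt_pi_div_two p.1
        have hb := arctan_lt_pi_div_two p.2
        linarith
      rw [hempty]
      exact convex_empty
  · have hset : {p : ℝ × ℝ | (0:ℝ) ≤ Real.arctan p.1 + Real.arctan p.2}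
        = {p : ℝ × ℝ | 0 ≤ p.1 + p.2} := by
      ext p
      simp only [Set.mem_setOf_eq]
      constructor
      · intro h
        by_contra hcon
        push_neg at hcon
        have hlt : p.1 < -p.2 := by linarith
        have := arctan_strictMono hlt
        rw [arctan_neg] at this
        linarith
      · intro h
        have hle : -p.2 ≤ p.1 := by linarith
        have := arctan_strictMono.monotone hle
        rw [arctan_neg] at this
        linarith
    rw [hset]
    intro p hp q hq a b ha hb hab
    simp only [Set.mem_setOf_eq] at hp hq ⊢
    have hfst : (a • p + b • q).1 = a * p.1 + b * q.1 := rfl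
    have hsnd : (a • p + b • q).2 = a * p.2 + b * q.2 := rfl
    rw [hfst, hsnd]
    nlinarith [mul_nonneg ha hp, mul_nonneg hb hq]
end
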